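/- Let k be a field of characteristic different from 2 and let P = k[X,Y,Z,W] be the polynomial ring in four variables. Let I be the ideal generated by {X²Z, X²W, YZ, YW}, and let J be the ideal generated by all 2×2 minors of the 4×4 Jacobian matrix (∂fᵢ/∂v)ᵢ, where (f₁,f₂,f₃,f₄) = (X²Z, X²W, YZ, YW) and v ranges over X, Y, Z, W. Then I + J = I + (X⁴, X²Y, XZ², XZW, XW², Y²), i.e., modulo I the Jacobian ideal equals the ideal generated by the images of X⁴, X²Y, XZ², XZW, XW², Y². -/
import Mathlib


open MvPolynomial

set_option maxHeartbeats 4000000 in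
/-- Let `k` be a field of characteristic `≠ 2`,
`P = k[X,Y,Z,W]`, `I = (X²Z, X²W, YZ, YW)`, and `J` the ideal generated by all
`2×2` minors of the Jacobian matrix of `(X²Z, X²W, YZ, YW)`. Then
`I + J = I + (X⁴, X²Y, XZ², XZW, XW², Y²)`. -/
theorem stmt_10 (k : Type) [Field k] (hk : ringChar k ≠ 2) :
    let P := MvPolynomial (Fin 4) k
    let X : P := MvPolynomial.X 0
    let Y : P := MvPolynomial.X 1
    let Z : P := MvPolynomial.X 2
    let W : P := MvPolynomial.X 3
    let f : Fin 4 → P := ![X ^ 2 * Z, X ^ 2 * W, Y * Z, Y * W]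
    let I : Ideal P := Ideal.span {X ^ 2 * Z, X ^ 2 * W, Y * Z, Y * W}
    let J : Ideal P := Ideal.span
      {m : P | ∃ r₁ r₂ c₁ c₂ : Fin 4,
        m = pderiv c₁ (f r₁) * pderiv c₂ (f r₂) - pderiv c₂ (f r₁) * pderiv c₁ (f r₂)}
    I ⊔ J = I ⊔ Ideal.span
      {X ^ 4, X ^ 2 * Y, X * Z ^ 2, X * Z * W, X * W ^ 2, Y ^ 2} := by
  intro P X Y Z W f I J
  have h2 : (2:k) ≠ 0 := Ring.two_ne_zero hk
  have h2P : (C (2⁻¹:k) : P) * 2 = 1 := by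
    rw [show ((2:P)) = C (2:k) from (map_ofNat C 2).symm, ← C_mul, inv_mul_cancel₀ h2, C_1]
  set S : Ideal P := Ideal.span {X ^ 4, X ^ 2 * Y, X * Z ^ 2, X * Z * W, X * W ^ 2, Y ^ 2}
    with hS
  have key : ∀ e c g : P, g ∈ I ⊔ S → e = c * g → e ∈ I ⊔ S := fun e c g hg he =>
    he ▸ Ideal.mul_mem_left _ c hg
  have g1 : (MvPolynomial.X 0 : P) ^ 2 * MvPolynomial.X 2 ∈ I ⊔ S :=
    Ideal.mem_sup_left (Ideal.subset_span (by left; rfl))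
  have g2 : (MvPolynomial.X 0 : P) ^ 2 * MvPolynomial.X 3 ∈ I ⊔ S :=
    Ideal.mem_sup_left (Ideal.subset_span (by right; left; rfl))
  have g3 : (MvPolynomial.X 1 : P) * MvPolynomial.X 2 ∈ I ⊔ S :=
    Ideal.mem_sup_left (Ideal.subset_span (by right; right; left; rfl))
  have g4 : (MvPolynomial.X 1 : P) * MvPolynomial.X 3 ∈ I ⊔ S :=
    Ideal.mem_sup_left (Ideal.subset_span (by right; right; right; rfl))
  have g5 : (MvPolynomial.X 0 : P) ^ 4 ∈ I ⊔ S :=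
    Ideal.mem_sup_right (Ideal.subset_span (by left; rfl))
  have g6 : (MvPolynomial.X 0 : P) ^ 2 * MvPolynomial.X 1 ∈ I ⊔ S :=
    Ideal.mem_sup_right (Ideal.subset_span (by right; left; rfl))
  have g7 : (MvPolynomial.X 0 : P) * MvPolynomial.X 2 ^ 2 ∈ I ⊔ S :=
    Ideal.mem_sup_right (Ideal.subset_span (by right; right; left; rfl))
  have g8 : (MvPolynomial.X 0 : P) * MvPolynomial.X 2 * MvPolynomial.X 3 ∈ I ⊔ S :=
    Ideal.mem_sup_right (Ideal.subset_span (by right; right; right; left; rfl))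
  have g9 : (MvPolynomial.X 0 : P) * MvPolynomial.X 3 ^ 2 ∈ I ⊔ S :=
    Ideal.mem_sup_right (Ideal.subset_span (by right; right; right; right; left; rfl))
  have g10 : (MvPolynomial.X 1 : P) ^ 2 ∈ I ⊔ S :=
    Ideal.mem_sup_right (Ideal.subset_span (by right; right; right; right; right; rfl))
  apply le_antisymm
  · apply sup_le le_sup_left
    rw [Ideal.span_le]
    rintro m ⟨r1, r2, c1, c2, rfl⟩
    fin_cases r1 <;> fin_cases r2 <;> fin_cases c1 <;> fin_cases c2 <;>
      simp [f, X, Y, Z, W, pderiv_mul, pderiv_pow, pderiv_X, Pi.single_apply] <;>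
      first
        | exact key _ 1 _ g1 (by ring1)
        | exact key _ (-1) _ g1 (by ring1)
        | exact key _ (2 * MvPolynomial.X 0) _ g1 (by ring1)
        | exact key _ (-(2 * MvPolynomial.X 0)) _ g1 (by ring1)
        | exact key _ 1 _ g2 (by ring1)
        | exact key _ (-1) _ g2 (by ring1)
        | exact key _ (2 * MvPolynomial.X 0) _ g2 (by ring1)
        | exact key _ (-(2 * MvPolynomial.X 0)) _ g2 (by ring1)
        | exact key _ 1 _ g3 (by ring1)
        | exact key _ (-1) _ g3 (by ring1)
        | exact key _ (2 * MvPolynomial.X 0) _ g3 (by ring1)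
        | exact key _ (-(2 * MvPolynomial.X 0)) _ g3 (by ring1)
        | exact key _ 1 _ g4 (by ring1)
        | exact key _ (-1) _ g4 (by ring1)
        | exact key _ (2 * MvPolynomial.X 0) _ g4 (by ring1)
        | exact key _ (-(2 * MvPolynomial.X 0)) _ g4 (by ring1)
        | exact key _ 1 _ g5 (by ring1)
        | exact key _ (-1) _ g5 (by ring1)
        | exact key _ 1 _ g6 (by ring1)
        | exact key _ (-1) _ g6 (by ring1)
        | exact key _ 2 _ g7 (by ring1)
        | exact key _ (-2) _ g7 (by ring1)
        | exact key _ 2 _ g8 (by ring1)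
        | exact key _ (-2) _ g8 (by ring1)
        | exact key _ 2 _ g9 (by ring1)
        | exact key _ (-2) _ g9 (by ring1)
        | exact key _ 1 _ g10 (by ring1)
        | exact key _ (-1) _ g10 (by ring1)
        | exact key _ 0 _ g5 (by ring1)
  · apply sup_le le_sup_left
    rw [Ideal.span_le]
    have hX4 : (MvPolynomial.X 0 : P) ^ 4 ∈ J := Ideal.subset_span
      ⟨0, 1, 2, 3, by simp [f, X, Y, Z, W, pderiv_mul, pderiv_pow, pderiv_X, Pi.single_apply]; ring⟩
    have hX2Y : (MvPolynomial.X 0 : P) ^ 2 * MvPolynomial.X 1 ∈ J := Ideal.subset_span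
      ⟨0, 3, 2, 3, by simp [f, X, Y, Z, W, pderiv_mul, pderiv_pow, pderiv_X, Pi.single_apply]⟩
    have hY2 : (MvPolynomial.X 1 : P) ^ 2 ∈ J := Ideal.subset_span
      ⟨2, 3, 2, 3, by simp [f, X, Y, Z, W, pderiv_mul, pderiv_pow, pderiv_X, Pi.single_apply]; ring⟩
    have hXZ2 : (2 : P) * (MvPolynomial.X 0 * MvPolynomial.X 2 ^ 2) ∈ J := Ideal.subset_span
      ⟨0, 2, 0, 1, by simp [f, X, Y, Z, W, pderiv_mul, pderiv_pow, pderiv_X, Pi.single_apply]; ring⟩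
    have hXZW : (2 : P) * (MvPolynomial.X 0 * MvPolynomial.X 2 * MvPolynomial.X 3) ∈ J :=
      Ideal.subset_span
      ⟨0, 3, 0, 1, by simp [f, X, Y, Z, W, pderiv_mul, pderiv_pow, pderiv_X, Pi.single_apply]; ring⟩
    have hXW2 : (2 : P) * (MvPolynomial.X 0 * MvPolynomial.X 3 ^ 2) ∈ J := Ideal.subset_span
      ⟨1, 3, 0, 1, by simp [f, X, Y, Z, W, pderiv_mul, pderiv_pow, pderiv_X, Pi.single_apply]; ring⟩
    have half : ∀ e : P, (2 : P) * e ∈ J → e ∈ J := by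
      intro e he
      have : e = C (2⁻¹:k) * ((2:P) * e) := by rw [← mul_assoc, h2P, one_mul]
      exact this ▸ Ideal.mul_mem_left _ _ he
    rintro m (rfl | rfl | rfl | rfl | rfl | rfl)
    · exact Ideal.mem_sup_right hX4
    · exact Ideal.mem_sup_right hX2Y
    · exact Ideal.mem_sup_right (half _ hXZ2)
    · exact Ideal.mem_sup_right (half _ hXZW)
    · exact Ideal.mem_sup_right (half _ hXW2)
    · exact Ideal.mem_sup_right hY2
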